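/- Let x, y be permutations of [n] with x(n) = y(n). Then x ⊵_R y with ℓ(x) = ℓ(y) + 1 if and only if x̂ ⊵_R ŷ with ℓ(x̂) = ℓ(ŷ) + 1. (In particular ℓ(x̂) = ℓ(x) − (n − x(n)).) -/
import Mathlib


/-- `o` is the outcome of running parking Algorithm A on preference vector `a`:
car `i` parks in the first unoccupied spot in `[a i, n]`, and every car parks. -/
def IsAOutcome {n : ℕ} (a o : Fin n → Fin n) : Prop :=
  Function.Injective o ∧ ∀ i, a i ≤ o i ∧
    ∀ s, a i ≤ s → s < o i → ∃ j, j < i ∧ o j = s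

/-- `a` is a parking function. -/
def IsParkingFunction {n : ℕ} (a : Fin n → Fin n) : Prop :=
  ∃ o, IsAOutcome a o

/-- `o` is the outcome of running parking Algorithm B on the pair `(a, b)`:
car `i` parks in the first unoccupied spot in `[a i, b i]`, and every car parks. -/
def IsBOutcome {n : ℕ} (a b o : Fin n → Fin n) : Prop :=
  Function.Injective o ∧ ∀ i, a i ≤ o i ∧ o i ≤ b i ∧
    ∀ s, a i ≤ s → s < o i → ∃ j, j < i ∧ o j = s

/-- `(a, b)` is an interval parking function. -/
def IsIPF {n : ℕ} (a b : Fin n → Fin n) : Prop :=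
  ∃ o, IsBOutcome a b o

/-- The conjugate (reverse complement) `x*` of `x`, with `x*(i) = n + 1 - x(n + 1 - i)`. -/
def pconj {n : ℕ} (f : Fin n → Fin n) : Fin n → Fin n :=
  fun i => (f i.rev).rev

/-- The pair `(x, y)` is reachable, `x ⊵_R y`: there is an IPF `(a, b)` with
`O(a) = x` and `O(b*) = y*`. -/
def Reaches {n : ℕ} (x y : Fin n → Fin n) : Prop :=
  ∃ a b : Fin n → Fin n, IsIPF a b ∧ IsAOutcome a x ∧ IsAOutcome (pconj b) (pconj y)

/-- Pseudoreachability `x ≥_P y`: the reflexive-transitive closure of reachability. -/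
def PseudoGE {n : ℕ} (x y : Equiv.Perm (Fin n)) : Prop :=
  Relation.ReflTransGen (fun u v : Equiv.Perm (Fin n) => Reaches ⇑u ⇑v) x y

/-- `#{k ∈ [i] : x(k) ≥ j}` (with `i`, `j` zero-indexed). -/
def bcount {n : ℕ} (x : Fin n → Fin n) (i j : Fin n) : ℕ :=
  (Finset.univ.filter (fun k : Fin n => k ≤ i ∧ j ≤ x k)).card

/-- The Bruhat order `x ≥_B y` on the symmetric group. -/
def BruhatGE {n : ℕ} (x y : Equiv.Perm (Fin n)) : Prop :=
  ∀ i j : Fin n, bcount ⇑y i j ≤ bcount ⇑x i j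

/-- The number of inversions (the Coxeter length) of `f`. -/
def invCount {n : ℕ} (f : Fin n → Fin n) : ℕ :=
  (Finset.univ.filter (fun p : Fin n × Fin n => p.1 < p.2 ∧ f p.2 < f p.1)).card

/-- The adjacent transposition `s_i` exchanging `i` and `i+1` (one-indexed),
as a permutation of `Fin n`. -/
def sgen (n : ℕ) (i : ℕ) : Equiv.Perm (Fin n) :=
  if h : 1 ≤ i ∧ i < n then Equiv.swap ⟨i - 1, by omega⟩ ⟨i, h.2⟩ else 1

/-- Left weak order: `x ≥_W y` iff `x = s_{i₁} ⋯ s_{i_k} · y` with `ℓ(x) = ℓ(y) + k`. -/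
def WeakGE {n : ℕ} (x y : Equiv.Perm (Fin n)) : Prop :=
  ∃ l : List ℕ, (∀ i ∈ l, 1 ≤ i ∧ i ≤ n - 1) ∧
    x = (l.map (sgen n)).prod * y ∧ invCount ⇑x = invCount ⇑y + l.length

/-- The projection `x ↦ x̂` deleting the last position and the value `x(n)`. -/
def hatf {n : ℕ} (x : Fin (n + 1) → Fin (n + 1)) : Fin n → Fin n :=
  fun i =>
    if h : (x i.castSucc).val < (x (Fin.last n)).val
    then ⟨(x i.castSucc).val, by have h1 := (x (Fin.last n)).isLt; omega⟩
    else ⟨(x i.castSucc).val - 1, by have h1 := (x i.castSucc).isLt; have h2 := i.isLt; omega⟩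

/-- `lam n f k` is `λ_k` of the permutation of `[n]` with one-line notation `f(1), …, f(n)`
(one-indexed): `λ_{n-1}(x) = n - x(n)` and `λ_k(x) = λ_k(x̄)` for `k ≤ n - 2`, where
`x̄ ∈ S_{n-1}` is the restriction of `u⁻¹·x` (`u = s_{x(n)} ⋯ s_{n-1}`), concretely
`x̄(i) = x(i)` if `x(i) < x(n)` and `x̄(i) = x(i) - 1` if `x(i) > x(n)`. -/
def lam : ℕ → (ℕ → ℕ) → ℕ → ℕ
  | 0, _, _ => 0
  | n + 1, f, k =>
    if k = n then (n + 1) - f (n + 1)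
    else lam n (fun i => if f i < f (n + 1) then f i else f i - 1) k

/-- The one-line notation of `x`, as a one-indexed function `ℕ → ℕ`. -/
def oneline {n : ℕ} (x : Fin n → Fin n) : ℕ → ℕ :=
  fun i => if h : i - 1 < n then (x ⟨i - 1, h⟩).val + 1 else 0

/-- `y` contains the pattern `σ`. -/
def ContainsPattern {n m : ℕ} (y : Equiv.Perm (Fin n)) (σ : Equiv.Perm (Fin m)) : Prop :=
  ∃ f : Fin m → Fin n, StrictMono f ∧ ∀ j k, y (f j) < y (f k) ↔ σ j < σ k

/-- `x` is an AR (Arndt–Riehl) permutation: `x⁻¹(i) ≤ i + 1` for all `i ∈ [n]`. -/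
def IsAR {n : ℕ} (x : Equiv.Perm (Fin n)) : Prop :=
  ∀ i : Fin n, (x.symm i).val ≤ i.val + 1

def RR {n : ℕ} (x y : Fin n → Fin n) : Prop :=
  ∀ i s : Fin n, y i < s → s ≤ x i → ∃ j, i < j ∧ y j = s

lemma fin_lt_rev {n : ℕ} {a b : Fin n} : a < b.rev ↔ b < a.rev := by
  conv_lhs => rw [← Fin.rev_rev a]
  exact Fin.rev_lt_rev

lemma fin_rev_le {n : ℕ} {a b : Fin n} : a.rev ≤ b ↔ b.rev ≤ a := by
  conv_lhs => rw [← Fin.rev_rev b]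
  exact Fin.rev_le_rev

lemma aoutcome_unique {n : ℕ} {a o o' : Fin n → Fin n}
    (h : IsAOutcome a o) (h' : IsAOutcome a o') : o = o' := by
  obtain ⟨ho, h⟩ := h
  obtain ⟨ho', h'⟩ := h'
  have key : ∀ m : ℕ, ∀ i : Fin n, i.val = m → o i = o' i := by
    intro m
    induction m using Nat.strong_induction_on with
    | _ m ih =>
      intro i him
      by_contra hne
      rcases lt_or_gt_of_ne hne with hlt | hlt
      · obtain ⟨j, hj, hoj⟩ := (h' i).2 (o i) (h i).1 hlt
        rw [← ih j.val (him ▸ hj) j rfl] at hoj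
        exact absurd (ho hoj) (Fin.ne_of_lt hj)
      · obtain ⟨j, hj, hoj⟩ := (h i).2 (o' i) (h' i).1 hlt
        rw [ih j.val (him ▸ hj) j rfl] at hoj
        exact absurd (ho' hoj) (Fin.ne_of_lt hj)
  funext i
  exact key i.val i rfl

lemma aoutcome_self {n : ℕ} {x : Fin n → Fin n} (hx : Function.Injective x) :
    IsAOutcome x x :=
  ⟨hx, fun i => ⟨le_refl _, fun _ hs1 hs2 => absurd hs1 (not_le_of_gt hs2)⟩⟩

lemma reaches_iff {n : ℕ} {x y : Fin n → Fin n}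
    (hx : Function.Injective x) (hy : Function.Injective y) :
    Reaches x y ↔ RR x y := by
  constructor
  · rintro ⟨a, b, ⟨o, hbo⟩, hax, hby⟩
    have hao : IsAOutcome a o :=
      ⟨hbo.1, fun i => ⟨(hbo.2 i).1, (hbo.2 i).2.2⟩⟩
    have hox : o = x := aoutcome_unique hao hax
    intro i s hs1 hs2
    rw [← hox] at hs2
    have hxb : o i ≤ b i := (hbo.2 i).2.1
    obtain ⟨hle, hsp⟩ := hby.2 i.rev
    obtain ⟨j, hj, hoj⟩ := hsp s.rev
      (by rw [pconj, Fin.rev_rev, Fin.rev_le_rev]; exact le_trans hs2 hxb)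
      (by rw [pconj, Fin.rev_rev, Fin.rev_lt_rev]; exact hs1)
    refine ⟨j.rev, fin_lt_rev.mp hj, ?_⟩
    rw [pconj] at hoj
    exact Fin.rev_injective hoj
  · intro hR
    refine ⟨x, fun i => max (x i) (y i), ⟨x, hx, fun i => ⟨le_refl _, le_max_left _ _,
      fun _ hs1 hs2 => absurd hs1 (not_le_of_gt hs2)⟩⟩, aoutcome_self hx, ?_⟩
    refine ⟨fun i j hij => ?_, fun i => ⟨?_, ?_⟩⟩
    · simp only [pconj] at hij
      have := Fin.rev_injective (hy (Fin.rev_injective hij))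
      simpa using this
    · simp only [pconj, Fin.rev_le_rev]
      exact le_max_right _ _
    · intro s hs1 hs2
      simp only [pconj] at hs1 hs2
      rw [fin_rev_le] at hs1
      rw [fin_lt_rev] at hs2
      have hsx : s.rev ≤ x i.rev := by
        rcases max_cases (x i.rev) (y i.rev) with ⟨heq, _⟩ | ⟨heq, _⟩
        · rwa [heq] at hs1
        · rw [heq] at hs1; exact absurd (lt_of_lt_of_le hs2 hs1) (lt_irrefl _)
      obtain ⟨j, hj, hyj⟩ := hR i.rev s.rev hs2 hsx
      refine ⟨j.rev, ?_, ?_⟩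
      · rw [← Fin.rev_rev i]
        exact Fin.rev_lt_rev.mpr hj
      · rw [pconj, Fin.rev_rev, hyj, Fin.rev_rev]

lemma hatf_val {n : ℕ} (x : Fin (n+1) → Fin (n+1)) (i : Fin n) :
    (hatf x i).val = if (x i.castSucc).val < (x (Fin.last n)).val
      then (x i.castSucc).val else (x i.castSucc).val - 1 := by
  unfold hatf; split <;> simp_all

lemma RR_hat {n : ℕ} {x y : Fin (n+1) → Fin (n+1)} (hx : Function.Injective x)
    (hy : Function.Injective y)
    (h : x (Fin.last n) = y (Fin.last n)) : RR x y ↔ RR (hatf x) (hatf y) := by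
  have hxne : ∀ i : Fin n, (x i.castSucc).val ≠ (x (Fin.last n)).val :=
    fun i he => absurd (hx (Fin.ext he)) (Fin.ne_of_lt (Fin.castSucc_lt_last i))
  have hyne : ∀ i : Fin n, (y i.castSucc).val ≠ (y (Fin.last n)).val :=
    fun i he => absurd (hy (Fin.ext he)) (Fin.ne_of_lt (Fin.castSucc_lt_last i))
  have hv : (x (Fin.last n)).val = (y (Fin.last n)).val := by rw [h]
  have hvn : (y (Fin.last n)).val < n + 1 := (y (Fin.last n)).isLt
  constructor
  · intro hR i s hs1 hs2
    have hsn : s.val < n := s.isLt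
    have hy1 := hyne i
    have hx1 := hxne i
    rw [Fin.lt_def, hatf_val] at hs1
    rw [Fin.le_def, hatf_val] at hs2
    -- the lifted spot
    have hsb : (if s.val < (y (Fin.last n)).val then s.val else s.val + 1) < n + 1 := by
      split_ifs <;> omega
    set s' : Fin (n+1) := ⟨if s.val < (y (Fin.last n)).val then s.val else s.val + 1, hsb⟩
      with hs'def
    have e : s'.val = if s.val < (y (Fin.last n)).val then s.val else s.val + 1 := rfl
    have key1 : y i.castSucc < s' := by
      rw [Fin.lt_def, e]
      split_ifs at hs1 ⊢ <;> omega
    have key2 : s' ≤ x i.castSucc := by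
      rw [Fin.le_def, e]
      split_ifs at hs2 ⊢ <;> omega
    obtain ⟨j, hj, hyj⟩ := hR i.castSucc s' key1 key2
    have hvj := congrArg Fin.val hyj
    rw [e] at hvj
    have hjl : j ≠ Fin.last n := by
      intro he
      rw [he] at hvj
      split_ifs at hvj <;> omega
    obtain ⟨j₀, hj₀⟩ := Fin.exists_castSucc_eq.mpr hjl
    rw [← hj₀] at hj hvj
    refine ⟨j₀, Fin.castSucc_lt_castSucc_iff.mp hj, Fin.ext ?_⟩
    rw [hatf_val]
    split_ifs at hvj ⊢ <;> omega
  · intro hR i s hs1 hs2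
    rw [Fin.lt_def] at hs1
    rw [Fin.le_def] at hs2
    have hsn1 : s.val < n + 1 := s.isLt
    by_cases hil : i = Fin.last n
    · rw [hil] at hs1 hs2
      omega
    obtain ⟨i₀, hi₀⟩ := Fin.exists_castSucc_eq.mpr hil
    rw [← hi₀] at hs1 hs2
    have hy1 := hyne i₀
    have hx1 := hxne i₀
    by_cases hsv : s.val = (y (Fin.last n)).val
    · refine ⟨Fin.last n, ?_, Fin.ext hsv.symm⟩
      rw [← hi₀]
      exact Fin.castSucc_lt_last i₀
    · have hn0 : 0 < n := i₀.pos
      have hsb : (if s.val < (y (Fin.last n)).val then s.val else s.val - 1) < n := by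
        split_ifs <;> omega
      set s₀ : Fin n := ⟨if s.val < (y (Fin.last n)).val then s.val else s.val - 1, hsb⟩
        with hs₀def
      have e : s₀.val = if s.val < (y (Fin.last n)).val then s.val else s.val - 1 := rfl
      have key1 : hatf y i₀ < s₀ := by
        rw [Fin.lt_def, hatf_val, e]
        split_ifs <;> omega
      have key2 : s₀ ≤ hatf x i₀ := by
        rw [Fin.le_def, hatf_val, e]
        split_ifs <;> omega
      obtain ⟨j₀, hj₀lt, hj₀⟩ := hR i₀ s₀ key1 key2
      have hvj := congrArg Fin.val hj₀
      rw [hatf_val, e] at hvj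
      have hy2 := hyne j₀
      refine ⟨j₀.castSucc, ?_, Fin.ext ?_⟩
      · rw [← hi₀]
        exact Fin.castSucc_lt_castSucc_iff.mpr hj₀lt
      · split_ifs at hvj <;> omega

lemma hatf_injective {n : ℕ} {x : Fin (n+1) → Fin (n+1)} (hx : Function.Injective x) :
    Function.Injective (hatf x) := by
  have hxne : ∀ i : Fin n, (x i.castSucc).val ≠ (x (Fin.last n)).val :=
    fun i he => absurd (hx (Fin.ext he)) (Fin.ne_of_lt (Fin.castSucc_lt_last i))
  intro i j hij
  have hvj := congrArg Fin.val hij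
  rw [hatf_val, hatf_val] at hvj
  have h1 := hxne i
  have h2 := hxne j
  have hcc : x i.castSucc = x j.castSucc := Fin.ext (by split_ifs at hvj <;> omega)
  exact Fin.castSucc_injective _ (hx hcc)

lemma hatf_lt_iff {n : ℕ} {x : Fin (n+1) → Fin (n+1)} (hx : Function.Injective x)
    (i j : Fin n) : hatf x i < hatf x j ↔ x i.castSucc < x j.castSucc := by
  have hxne : ∀ i : Fin n, (x i.castSucc).val ≠ (x (Fin.last n)).val :=
    fun i he => absurd (hx (Fin.ext he)) (Fin.ne_of_lt (Fin.castSucc_lt_last i))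
  have h1 := hxne i
  have h2 := hxne j
  rw [Fin.lt_def, Fin.lt_def, hatf_val, hatf_val]
  split_ifs <;> omega

lemma invCount_hat {n : ℕ} {x : Fin (n+1) → Fin (n+1)} (hx : Function.Bijective x) :
    invCount x = invCount (hatf x) + (n - (x (Fin.last n)).val) := by
  classical
  have key := Finset.card_filter_add_card_filter_not
    (s := Finset.univ.filter
      (fun p : Fin (n+1) × Fin (n+1) => p.1 < p.2 ∧ x p.2 < x p.1))
    (p := fun p : Fin (n+1) × Fin (n+1) => p.2 = Fin.last n)
  have hB : ((Finset.univ.filter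
      (fun p : Fin (n+1) × Fin (n+1) => p.1 < p.2 ∧ x p.2 < x p.1)).filter
      (fun p => p.2 = Fin.last n)).card = n - (x (Fin.last n)).val := by
    have hcard : (Finset.Ioi (x (Fin.last n))).card = n - (x (Fin.last n)).val := by
      simp [Fin.card_Ioi]
    rw [← hcard]
    apply Finset.card_bij (fun p _ => x p.1)
    · intro p hp
      simp only [Finset.mem_filter, Finset.mem_univ, true_and] at hp
      simp only [Finset.mem_Ioi]
      rw [← hp.2]
      exact hp.1.2
    · intro p hp q hq he
      simp only [Finset.mem_filter, Finset.mem_univ, true_and] at hp hq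
      have h1 : p.1 = q.1 := hx.1 he
      have h2 : p.2 = q.2 := by rw [hp.2, hq.2]
      exact Prod.ext h1 h2
    · intro w hw
      simp only [Finset.mem_Ioi] at hw
      obtain ⟨k, hk⟩ := hx.2 w
      have hkl : k ≠ Fin.last n := by
        intro he
        rw [he] at hk
        rw [hk] at hw
        exact lt_irrefl _ hw
      have hklt : k < Fin.last n := lt_of_le_of_ne (Fin.le_last k) hkl
      refine ⟨(k, Fin.last n), ?_, hk⟩
      simp only [Finset.mem_filter, Finset.mem_univ, true_and]
      exact ⟨⟨hklt, by rw [hk]; exact hw⟩, trivial⟩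
  have hA : ((Finset.univ.filter
      (fun p : Fin (n+1) × Fin (n+1) => p.1 < p.2 ∧ x p.2 < x p.1)).filter
      (fun p => ¬ p.2 = Fin.last n)).card = invCount (hatf x) := by
    rw [invCount]
    symm
    apply Finset.card_bij (fun (q : Fin n × Fin n) _ => (q.1.castSucc, q.2.castSucc))
    · intro q hq
      simp only [Finset.mem_filter, Finset.mem_univ, true_and] at hq ⊢
      refine ⟨⟨Fin.castSucc_lt_castSucc_iff.mpr hq.1, ?_⟩, ?_⟩
      · exact (hatf_lt_iff hx.1 q.2 q.1).mp hq.2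
      · exact Fin.ne_of_lt (Fin.castSucc_lt_last q.2)
    · intro q hq r hr he
      have h1 := congrArg Prod.fst he
      have h2 := congrArg Prod.snd he
      simp only at h1 h2
      exact Prod.ext (Fin.castSucc_injective _ h1) (Fin.castSucc_injective _ h2)
    · intro p hp
      simp only [Finset.mem_filter, Finset.mem_univ, true_and] at hp
      obtain ⟨⟨hlt, hinv⟩, hne⟩ := hp
      have h1ne : p.1 ≠ Fin.last n :=
        Fin.ne_of_lt (lt_of_lt_of_le hlt (le_of_lt (lt_of_le_of_ne (Fin.le_last p.2) hne)))
      obtain ⟨q1, hq1⟩ := Fin.exists_castSucc_eq.mpr h1ne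
      obtain ⟨q2, hq2⟩ := Fin.exists_castSucc_eq.mpr hne
      refine ⟨(q1, q2), ?_, ?_⟩
      · simp only [Finset.mem_filter, Finset.mem_univ, true_and]
        constructor
        · rw [← hq1, ← hq2] at hlt
          exact Fin.castSucc_lt_castSucc_iff.mp hlt
        · apply (hatf_lt_iff hx.1 q2 q1).mpr
          rw [hq1, hq2]
          exact hinv
      · simp only
        rw [hq1, hq2]
  rw [invCount, ← key, hA, hB]
  omega

/-- Corollary `cor:rcover`. For `x, y ∈ S_n` (`n ≥ 2`) with
`x(n) = y(n)`: `x ⊵_R y` with `ℓ(x) = ℓ(y) + 1` iff `x̂ ⊵_R ŷ` with `ℓ(x̂) = ℓ(ŷ) + 1`;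
in particular `ℓ(x̂) = ℓ(x) - (n - x(n))`. -/
theorem stmt10 {n : ℕ} (hn : 1 ≤ n) (x y : Equiv.Perm (Fin (n + 1)))
    (h : x (Fin.last n) = y (Fin.last n)) :
    ((Reaches ⇑x ⇑y ∧ invCount ⇑x = invCount ⇑y + 1) ↔
      (Reaches (hatf ⇑x) (hatf ⇑y) ∧ invCount (hatf ⇑x) = invCount (hatf ⇑y) + 1)) ∧
    invCount (hatf ⇑x) = invCount ⇑x - (n - (x (Fin.last n)).val) := by
  have hcoe : (⇑x) (Fin.last n) = (⇑y) (Fin.last n) := h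
  have e1 := invCount_hat (x := ⇑x) x.bijective
  have e2 := invCount_hat (x := ⇑y) y.bijective
  have hvv : ((y : Fin (n+1) → Fin (n+1)) (Fin.last n)).val
      = ((x : Fin (n+1) → Fin (n+1)) (Fin.last n)).val := by rw [h]
  rw [hvv] at e2
  have hhat : RR ⇑x ⇑y ↔ RR (hatf ⇑x) (hatf ⇑y) := RR_hat x.injective y.injective hcoe
  have hr1 : Reaches ⇑x ⇑y ↔ RR ⇑x ⇑y := reaches_iff x.injective y.injective
  have hr2 : Reaches (hatf ⇑x) (hatf ⇑y) ↔ RR (hatf ⇑x) (hatf ⇑y) :=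
    reaches_iff (hatf_injective x.injective) (hatf_injective y.injective)
  refine ⟨⟨?_, ?_⟩, by omega⟩
  · rintro ⟨hr, hl⟩
    exact ⟨hr2.mpr (hhat.mp (hr1.mp hr)), by omega⟩
  · rintro ⟨hr, hl⟩
    exact ⟨hr1.mpr (hhat.mpr (hr2.mp hr)), by omega⟩
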